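/- Let G be a finite simple graph, let k ≥ 3 be an integer, and let (λ, x) be an eigenpair of the k-power hypergraph G^(k). Then for every edge {i,j} of G, writing x^{N_{{i,j}}} = ∏_{v ∈ N_{{i,j}}} x_v, one has (x^{N_{{i,j}}})^{k−3} · ( λ^{k−2} · (x^{N_{{i,j}}})² − (x_i x_j)^{k−2} ) = 0. In particular, if k = 3 then λ^{k−2}(x^{N_{{i,j}}})² = (x_i x_j)^{k−2}, and if k ≥ 4 then either x^{N_{{i,j}}} = 0 or λ^{k−2}(x^{N_{{i,j}}})² = (x_i x_j)^{k−2}. -/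

import Mathlib

open Finset

/-- `(lam, x)` is an eigenpair of the `k`-uniform hypergraph with hyperedge set `E`:
`x` is nonzero and for every vertex `i`,
`lam * x i ^ (k-1) = ∑_{e ∈ E, i ∈ e} ∏_{v ∈ e \ {i}} x v`. -/
def IsHypergraphEigenpair {W : Type*} [Fintype W] [DecidableEq W]
    (k : ℕ) (E : Finset (Finset W)) (lam : ℂ) (x : W → ℂ) : Prop :=
  x ≠ 0 ∧ ∀ i : W, lam * x i ^ (k - 1) =
    ∑ e ∈ E.filter (fun e => i ∈ e), ∏ v ∈ e.erase i, x v

/-- `lam` is an eigenvalue of the `k`-uniform hypergraph with hyperedge set `E`. -/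
def IsHypergraphEigenvalue {W : Type*} [Fintype W] [DecidableEq W]
    (k : ℕ) (E : Finset (Finset W)) (lam : ℂ) : Prop :=
  ∃ x, IsHypergraphEigenpair k E lam x

/-- The hyperedge of the `k`-power hypergraph `G^(k)` corresponding to the edge `e` of `G`:
it consists of the two endpoints of `e` together with the `k - 2` added vertices on `e`. -/
def powerEdge {V : Type*} [Fintype V] [DecidableEq V] (G : SimpleGraph V) [DecidableRel G.Adj]
    (k : ℕ) (e : G.edgeSet) : Finset (V ⊕ (G.edgeSet × Fin (k - 2))) :=
  Finset.univ.filter (fun v =>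
    (∃ i, v = Sum.inl i ∧ i ∈ (e : Sym2 V)) ∨ ∃ t, v = Sum.inr (e, t))

/-- The hyperedge set of the `k`-power hypergraph `G^(k)`, whose vertices are the vertices of `G`
(`Sum.inl`) together with `k - 2` new vertices for each edge of `G` (`Sum.inr`). -/
def powerEdges {V : Type*} [Fintype V] [DecidableEq V] (G : SimpleGraph V) [DecidableRel G.Adj]
    (k : ℕ) : Finset (Finset (V ⊕ (G.edgeSet × Fin (k - 2)))) :=
  Finset.univ.image (powerEdge G k)

lemma mem_powerEdge {V : Type*} [Fintype V] [DecidableEq V] (G : SimpleGraph V)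
    [DecidableRel G.Adj] {k : ℕ} {e : G.edgeSet} {v : V ⊕ (G.edgeSet × Fin (k - 2))} :
    v ∈ powerEdge G k e ↔
      (∃ i, v = Sum.inl i ∧ i ∈ (e : Sym2 V)) ∨ ∃ t, v = Sum.inr (e, t) := by
  simp [powerEdge]

/-- If `(lam, x)` is an eigenpair of `G^(k)` (`k ≥ 3`), then for every edge `{i,j}` of `G`,
writing `P = ∏_{v ∈ N_{ij}} x_v`, one has `P^(k-3) * (lam^(k-2) * P² - (x_i x_j)^(k-2)) = 0`.
In particular, for `k = 3` one has `lam^(k-2) * P² = (x_i x_j)^(k-2)`, and for `k ≥ 4`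
either `P = 0` or `lam^(k-2) * P² = (x_i x_j)^(k-2)`. -/
theorem power_hypergraph_eigenpair_edge_equation
    {V : Type*} [Fintype V] [DecidableEq V] (G : SimpleGraph V) [DecidableRel G.Adj]
    (k : ℕ) (hk : 3 ≤ k) (lam : ℂ) (x : V ⊕ (G.edgeSet × Fin (k - 2)) → ℂ)
    (hpair : IsHypergraphEigenpair k (powerEdges G k) lam x) :
    ∀ (i j : V) (h : G.Adj i j),
      (∏ t : Fin (k - 2), x (Sum.inr (⟨s(i, j), h⟩, t))) ^ (k - 3) *
          (lam ^ (k - 2) * (∏ t : Fin (k - 2), x (Sum.inr (⟨s(i, j), h⟩, t))) ^ 2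
            - (x (Sum.inl i) * x (Sum.inl j)) ^ (k - 2)) = 0 ∧
      (k = 3 →
        lam ^ (k - 2) * (∏ t : Fin (k - 2), x (Sum.inr (⟨s(i, j), h⟩, t))) ^ 2
          = (x (Sum.inl i) * x (Sum.inl j)) ^ (k - 2)) ∧
      (4 ≤ k →
        (∏ t : Fin (k - 2), x (Sum.inr (⟨s(i, j), h⟩, t))) = 0 ∨
        lam ^ (k - 2) * (∏ t : Fin (k - 2), x (Sum.inr (⟨s(i, j), h⟩, t))) ^ 2
          = (x (Sum.inl i) * x (Sum.inl j)) ^ (k - 2)) := by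
  obtain ⟨-, heig⟩ := hpair
  intro i j h
  obtain ⟨m, rfl⟩ : ∃ m, k = m + 3 := ⟨k - 3, by omega⟩
  set e : G.edgeSet := ⟨s(i, j), h⟩ with he
  set f : Fin (m + 3 - 2) → ℂ := fun t => x (Sum.inr (e, t)) with hf
  set P : ℂ := ∏ t, f t with hP
  set A : ℂ := x (Sum.inl i) * x (Sum.inl j) with hA
  have hne : i ≠ j := h.ne
  -- the eigenvalue equation at the added vertex `(e, t)`
  have key : ∀ t : Fin (m + 3 - 2),
      lam * f t ^ (m + 3 - 1) = A * ∏ t' ∈ univ.erase t, f t' := by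
    intro t
    have h1 := heig (Sum.inr (e, t))
    have hfilter : (powerEdges G (m + 3)).filter (fun E => Sum.inr (e, t) ∈ E)
        = {powerEdge G (m + 3) e} := by
      ext E
      simp only [mem_filter, mem_singleton, powerEdges, mem_image, mem_univ, true_and]
      constructor
      · rintro ⟨⟨e', rfl⟩, hmem⟩
        rw [mem_powerEdge] at hmem
        rcases hmem with ⟨i', hi', -⟩ | ⟨t', ht'⟩
        · exact absurd hi' (by simp)
        · simp only [Sum.inr.injEq, Prod.mk.injEq] at ht'
          obtain ⟨rfl, rfl⟩ := ht'
          rfl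
      · rintro rfl
        exact ⟨⟨e, rfl⟩, (mem_powerEdge G).2 (Or.inr ⟨t, rfl⟩)⟩
    have herase : (powerEdge G (m + 3) e).erase (Sum.inr (e, t))
        = insert (Sum.inl i) (insert (Sum.inl j)
            ((univ.erase t).image fun t' => Sum.inr (e, t'))) := by
      ext v
      rcases v with a | ⟨e', t'⟩
      · simp only [mem_erase, mem_powerEdge, mem_insert, mem_image, mem_erase, mem_univ,
          true_and]
        constructor
        · rintro ⟨-, hv⟩
          rcases hv with ⟨i', hi', hmem⟩ | ⟨t', ht'⟩
          · obtain rfl : a = i' := Sum.inl.inj hi'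
            have : a = i ∨ a = j := by
              have : a ∈ s(i, j) := hmem
              rwa [Sym2.mem_iff] at this
            rcases this with rfl | rfl
            · exact Or.inl rfl
            · exact Or.inr (Or.inl rfl)
          · exact absurd ht' (by simp)
        · rintro (ha | (ha | ⟨t', -, ht'⟩))
          · obtain rfl := Sum.inl.inj ha
            exact ⟨by simp, Or.inl ⟨a, rfl, by simp [he]⟩⟩
          · obtain rfl := Sum.inl.inj ha
            exact ⟨by simp, Or.inl ⟨a, rfl, by simp [he]⟩⟩
          · exact absurd ht' (by simp)
      · simp only [mem_erase, mem_powerEdge, mem_insert, mem_image, mem_erase, mem_univ,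
          true_and]
        constructor
        · rintro ⟨hv, hmem⟩
          rcases hmem with ⟨i', hi', -⟩ | ⟨t'', ht''⟩
          · exact absurd hi' (by simp)
          · simp only [Sum.inr.injEq, Prod.mk.injEq] at ht''
            obtain ⟨rfl, rfl⟩ := ht''
            refine Or.inr (Or.inr ⟨t', ⟨fun ht => hv ?_, trivial⟩, rfl⟩)
            rw [ht]
        · rintro (hv | (hv | ⟨t'', ht'', heq⟩))
          · exact absurd hv (by simp)
          · exact absurd hv (by simp)
          · simp only [Sum.inr.injEq, Prod.mk.injEq] at heq
            obtain ⟨rfl, rfl⟩ := heq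
            exact ⟨by simpa using ht'', Or.inr ⟨t'', rfl⟩⟩
    rw [hfilter, Finset.sum_singleton, herase] at h1
    rw [h1, Finset.prod_insert, Finset.prod_insert, Finset.prod_image, mul_assoc]
    · intro a _ b _ hab
      simpa using hab
    · simp [hne]
    · simp [hne]
  -- multiply the equations over all `t`
  have hQP : (∏ t, ∏ t' ∈ univ.erase t, f t') * P = P ^ (m + 1) := by
    have : ∀ t : Fin (m + 3 - 2), (∏ t' ∈ univ.erase t, f t') * f t = P := by
      intro t
      rw [mul_comm, Finset.mul_prod_erase _ _ (mem_univ t)]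
    calc (∏ t, ∏ t' ∈ univ.erase t, f t') * P
        = ∏ t, ((∏ t' ∈ univ.erase t, f t') * f t) := by
          rw [Finset.prod_mul_distrib]
      _ = ∏ _t : Fin (m + 3 - 2), P := Finset.prod_congr rfl fun t _ => this t
      _ = P ^ (m + 1) := by simp
  have hmul : lam ^ (m + 1) * P ^ (m + 2) = A ^ (m + 1) * ∏ t, ∏ t' ∈ univ.erase t, f t' := by
    calc lam ^ (m + 1) * P ^ (m + 2)
        = ∏ t : Fin (m + 3 - 2), (lam * f t ^ (m + 3 - 1)) := by
          rw [Finset.prod_mul_distrib, Finset.prod_const, Finset.prod_pow]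
          simp [hP]
      _ = ∏ t : Fin (m + 3 - 2), (A * ∏ t' ∈ univ.erase t, f t') :=
          Finset.prod_congr rfl fun t _ => key t
      _ = A ^ (m + 1) * ∏ t, ∏ t' ∈ univ.erase t, f t' := by
          rw [Finset.prod_mul_distrib, Finset.prod_const]
          simp
  have hmain : P ^ (m + 1) * (lam ^ (m + 1) * P ^ 2 - A ^ (m + 1)) = 0 := by
    have h2 : lam ^ (m + 1) * P ^ (m + 3) = A ^ (m + 1) * P ^ (m + 1) := by
      calc lam ^ (m + 1) * P ^ (m + 3)
          = (lam ^ (m + 1) * P ^ (m + 2)) * P := by ring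
        _ = A ^ (m + 1) * ((∏ t, ∏ t' ∈ univ.erase t, f t') * P) := by rw [hmul]; ring
        _ = A ^ (m + 1) * P ^ (m + 1) := by rw [hQP]
    linear_combination h2
  -- the k = 3 case directly
  have h3 : m + 3 = 3 → lam ^ (m + 1) * P ^ 2 = A ^ (m + 1) := by
    intro hm
    obtain rfl : m = 0 := by omega
    have hk0 := key 0
    have hPe : P = f 0 := by
      rw [hP]
      exact Fin.prod_univ_one f
    have : (univ.erase (0 : Fin (0 + 3 - 2))) = ∅ := by decide
    rw [this] at hk0
    simp only [Finset.prod_empty, mul_one] at hk0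
    rw [hPe]
    simpa using hk0
  -- the k ≥ 4 case
  have h4 : 4 ≤ m + 3 → P = 0 ∨ lam ^ (m + 1) * P ^ 2 = A ^ (m + 1) := by
    intro hm
    rcases mul_eq_zero.1 hmain with hz | hz
    · exact Or.inl ((pow_eq_zero_iff (Nat.succ_ne_zero m)).1 hz)
    · exact Or.inr (by linear_combination hz)
  -- assemble
  have hk2 : m + 3 - 2 = m + 1 := rfl
  have hk3 : m + 3 - 3 = m := rfl
  refine ⟨?_, ?_, ?_⟩
  · by_cases hm : m = 0
    · subst hm
      have h0 := h3 rfl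
      have hz : lam ^ (0 + 3 - 2) * P ^ 2 - A ^ (0 + 3 - 2) = 0 := by
        rw [sub_eq_zero]; exact h0
      rw [hz, mul_zero]
    · rcases h4 (by omega) with hz | hz
      · rw [hk3, hk2, hz, zero_pow hm, zero_mul]
      · rw [hk3, hk2, hz, sub_self, mul_zero]
  · intro hm
    exact h3 hm
  · intro hm
    exact h4 hm
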